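/- arXiv:2209.11900 — 9 statements merged into one kernel-verified Lean document; each statement's English description precedes it below -/
import Mathlib

section
/- Let b : Ĝ → ℚ satisfy the gnat condition at the junior element g. Then the distinguished point p_b of b satisfies the commutation relations, i.e. p_b(ρ·χ_j, j′)·p_b(ρ, j) = p_b(ρ·χ_{j′}, j)·p_b(ρ, j′) for all ρ ∈ Ĝ and all j, j′ ∈ {1,…,n}; in other words, p_b is a McKay-quiver point. -/
open Complex

/-- `b : Ĝ → ℚ` satisfies the gnat condition at a junior element with data `a j / d`:
for all `ρ` and `j`, the number `b ρ + a j / d - b (ρ * χ j)` is a non-negative integer. -/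
def GnatCond {G : Type*} [CommGroup G] {n : ℕ} (χ : Fin n → (G →* ℂˣ))
    (d : ℕ) (a : Fin n → ℕ) (b : (G →* ℂˣ) → ℚ) : Prop :=
  ∀ (ρ : G →* ℂˣ) (j : Fin n), ∃ z : ℕ,
    b ρ + (a j : ℚ) / (d : ℚ) - b (ρ * χ j) = (z : ℚ)

/-- The distinguished point of `b`: `p_b (ρ, j) = 1` if `b ρ + a j / d = b (ρ * χ j)`,
and `0` otherwise. -/
def distPt {G : Type*} [CommGroup G] {n : ℕ} (χ : Fin n → (G →* ℂˣ))
    (d : ℕ) (a : Fin n → ℕ) (b : (G →* ℂˣ) → ℚ) : (G →* ℂˣ) → Fin n → ℂ :=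
  fun ρ j => if b ρ + (a j : ℚ) / (d : ℚ) = b (ρ * χ j) then 1 else 0

lemma distPt_key {G : Type*} [CommGroup G] {n : ℕ} (χ : Fin n → (G →* ℂˣ))
    (d : ℕ) (a : Fin n → ℕ) (b : (G →* ℂˣ) → ℚ) (hb : GnatCond χ d a b)
    (ρ : G →* ℂˣ) (j j' : Fin n)
    (h1 : b ρ + (a j : ℚ) / d = b (ρ * χ j))
    (h2 : b (ρ * χ j) + (a j' : ℚ) / d = b (ρ * χ j * χ j')) :
    b ρ + (a j' : ℚ) / d = b (ρ * χ j') ∧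
    b (ρ * χ j') + (a j : ℚ) / d = b (ρ * χ j' * χ j) := by
  obtain ⟨z, hz⟩ := hb ρ j'
  obtain ⟨z', hz'⟩ := hb (ρ * χ j') j
  have hc : ρ * χ j' * χ j = ρ * χ j * χ j' := mul_right_comm ρ (χ j') (χ j)
  rw [hc] at hz'
  have hz0 : (z : ℚ) ≥ 0 := Nat.cast_nonneg z
  have hz'0 : (z' : ℚ) ≥ 0 := Nat.cast_nonneg z'
  rw [hc]
  constructor <;> linarith

/-- The distinguished point of a gnat-condition family satisfies the McKay-quiver
commutation relations. -/
theorem stmt0 {G : Type*} [CommGroup G] [Fintype G] {n : ℕ} (hn : 1 ≤ n)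
    (χ : Fin n → (G →* ℂˣ))
    (hgen : Subgroup.closure (Set.range χ) = (⊤ : Subgroup (G →* ℂˣ)))
    (hprod : ∏ j, χ j = 1)
    (g : G) (d : ℕ) (hd : orderOf g = d)
    (a : Fin n → ℕ) (ha : ∀ j, a j < d)
    (hchi : ∀ j, ((χ j g : ℂˣ) : ℂ) =
      Complex.exp (2 * (Real.pi : ℂ) * Complex.I * (a j : ℂ) / (d : ℂ)))
    (hjunior : ∑ j, a j = d)
    (b : (G →* ℂˣ) → ℚ) (hb : GnatCond χ d a b) :
    ∀ (ρ : G →* ℂˣ) (j j' : Fin n),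
      distPt χ d a b (ρ * χ j) j' * distPt χ d a b ρ j =
      distPt χ d a b (ρ * χ j') j * distPt χ d a b ρ j' := by
  intro ρ j j'
  unfold distPt
  by_cases h1 : b ρ + (a j : ℚ) / d = b (ρ * χ j)
  · by_cases h2 : b (ρ * χ j) + (a j' : ℚ) / d = b (ρ * χ j * χ j')
    · obtain ⟨k1, k2⟩ := distPt_key χ d a b hb ρ j j' h1 h2
      simp [h1, h2, k1, k2]
    · -- LHS = 0; show RHS = 0
      by_cases h3 : b ρ + (a j' : ℚ) / d = b (ρ * χ j')
      · by_cases h4 : b (ρ * χ j') + (a j : ℚ) / d = b (ρ * χ j' * χ j)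
        · obtain ⟨k1, k2⟩ := distPt_key χ d a b hb ρ j' j h3 h4
          exact absurd k2 h2
        · simp [h2, h4]
      · simp [h2, h3]
  · by_cases h3 : b ρ + (a j' : ℚ) / d = b (ρ * χ j')
    · by_cases h4 : b (ρ * χ j') + (a j : ℚ) / d = b (ρ * χ j' * χ j)
      · obtain ⟨k1, k2⟩ := distPt_key χ d a b hb ρ j' j h3 h4
        exact absurd k1 h1
      · simp [h1, h4]
    · simp [h1, h3]
end

section
/- Let b : Ĝ → ℚ satisfy the gnat condition at the junior element g, with distinguished point p_b. If S ⊆ Ĝ is a nonempty proper p_b-closed subset, then for every ρ ∈ Ĝ∖S and every j ∈ {1,…,n} with ρ·χ_j ∈ S one has p_b(ρ, j) = 1, i.e. b(ρ) + a_j/d = b(ρ·χ_j). -/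
open Complex

/-- `S ⊆ Ĝ` is `p`-closed: for every `ρ ∈ S` and every `j`, `p ρ j ≠ 0` implies
`ρ * χ j ∈ S`. -/
def PClosed {G : Type*} [CommGroup G] {n : ℕ} (χ : Fin n → (G →* ℂˣ))
    (p : (G →* ℂˣ) → Fin n → ℂ) (S : Set (G →* ℂˣ)) : Prop :=
  ∀ ρ ∈ S, ∀ j : Fin n, p ρ j ≠ 0 → ρ * χ j ∈ S

/-- Along any path in the McKay quiver, `b` drops by at most the sum of the weights. -/
lemma path_le {G : Type*} [CommGroup G] {n : ℕ} (χ : Fin n → (G →* ℂˣ))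
    (d : ℕ) (a : Fin n → ℕ) (b : (G →* ℂˣ) → ℚ) (hb : GnatCond χ d a b) :
    ∀ (l : List (Fin n)) (τ : G →* ℂˣ),
      b (τ * (l.map χ).prod) ≤ b τ + ((l.map a).sum : ℚ) / d := by
  intro l
  induction l with
  | nil =>
    intro τ
    have e : τ * (([] : List (Fin n)).map χ).prod = τ := mul_one τ
    rw [e]
    simp
  | cons k l ih =>
    intro τ
    obtain ⟨z, hz⟩ := hb τ k
    have h1 := ih (τ * χ k)
    have h2 : (((k :: l).map χ)).prod = χ k * (l.map χ).prod := List.prod_cons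
    have he : τ * ((k :: l).map χ).prod = (τ * χ k) * (l.map χ).prod := by
      calc τ * ((k :: l).map χ).prod = τ * (χ k * (l.map χ).prod) := by rw [h2]
        _ = (τ * χ k) * (l.map χ).prod := (mul_assoc (G := G →* ℂˣ) τ (χ k) ((l.map χ).prod)).symm
    rw [he]
    have hz0 : (0 : ℚ) ≤ (z : ℚ) := Nat.cast_nonneg z
    have hs : (((k :: l).map a).sum : ℚ) / d
        = (a k : ℚ) / d + ((l.map a).sum : ℚ) / d := by
      push_cast [List.map_cons, List.sum_cons]
      ring
    rw [hs]
    linarith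

/-- If `b` drops by exactly the sum of weights along a path starting in `S`,
then the endpoint is in `S`. -/
lemma path_eq_mem {G : Type*} [CommGroup G] {n : ℕ} (χ : Fin n → (G →* ℂˣ))
    (d : ℕ) (a : Fin n → ℕ) (b : (G →* ℂˣ) → ℚ) (hb : GnatCond χ d a b)
    (S : Set (G →* ℂˣ)) (hSclosed : PClosed χ (distPt χ d a b) S) :
    ∀ (l : List (Fin n)) (τ : G →* ℂˣ), τ ∈ S →
      b (τ * (l.map χ).prod) = b τ + ((l.map a).sum : ℚ) / d →
      τ * (l.map χ).prod ∈ S := by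
  intro l
  induction l with
  | nil =>
    intro τ hτ _
    have e : τ * (([] : List (Fin n)).map χ).prod = τ := mul_one τ
    rw [e]
    exact hτ
  | cons k l ih =>
    intro τ hτ heq
    obtain ⟨z, hz⟩ := hb τ k
    have h2 : (((k :: l).map χ)).prod = χ k * (l.map χ).prod := List.prod_cons
    have he : τ * ((k :: l).map χ).prod = (τ * χ k) * (l.map χ).prod := by
      calc τ * ((k :: l).map χ).prod = τ * (χ k * (l.map χ).prod) := by rw [h2]
        _ = (τ * χ k) * (l.map χ).prod := (mul_assoc (G := G →* ℂˣ) τ (χ k) ((l.map χ).prod)).symm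
    rw [he] at heq ⊢
    have hs : (((k :: l).map a).sum : ℚ) / d
        = (a k : ℚ) / d + ((l.map a).sum : ℚ) / d := by
      push_cast [List.map_cons, List.sum_cons]
      ring
    rw [hs] at heq
    have hle := path_le χ d a b hb l (τ * χ k)
    have hz0 : (0 : ℚ) ≤ (z : ℚ) := Nat.cast_nonneg z
    have hstep : b τ + (a k : ℚ) / d = b (τ * χ k) := by linarith
    have hmem : τ * χ k ∈ S := by
      apply hSclosed τ hτ k
      simp [distPt, hstep]
    exact ih (τ * χ k) hmem (by linarith)

/-- If `S` is a nonempty proper `p_b`-closed subset, then every arrow entering `S`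
from outside is nonzero in the distinguished point. -/
theorem stmt1 {G : Type*} [CommGroup G] [Fintype G] {n : ℕ} (hn : 1 ≤ n)
    (χ : Fin n → (G →* ℂˣ))
    (hgen : Subgroup.closure (Set.range χ) = (⊤ : Subgroup (G →* ℂˣ)))
    (hprod : ∏ j, χ j = 1)
    (g : G) (d : ℕ) (hd : orderOf g = d)
    (a : Fin n → ℕ) (ha : ∀ j, a j < d)
    (hchi : ∀ j, ((χ j g : ℂˣ) : ℂ) =
      Complex.exp (2 * (Real.pi : ℂ) * Complex.I * (a j : ℂ) / (d : ℂ)))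
    (hjunior : ∑ j, a j = d)
    (b : (G →* ℂˣ) → ℚ) (hb : GnatCond χ d a b)
    (S : Set (G →* ℂˣ)) (hSne : S.Nonempty) (hSproper : S ≠ Set.univ)
    (hSclosed : PClosed χ (distPt χ d a b) S) :
    ∀ ρ ∉ S, ∀ j : Fin n, ρ * χ j ∈ S →
      b ρ + (a j : ℚ) / (d : ℚ) = b (ρ * χ j) := by
  intro ρ hρ j hτ
  obtain ⟨z, hz⟩ := hb ρ j
  set l : List (Fin n) := (List.finRange n).erase j with hl
  have hjmem : j ∈ List.finRange n := List.mem_finRange j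
  have hprodl : χ j * (l.map χ).prod = 1 :=
    (List.prod_map_erase χ hjmem).trans ((Fin.prod_univ_def χ).symm.trans hprod)
  have hend : (ρ * χ j) * (l.map χ).prod = ρ := by
    calc (ρ * χ j) * (l.map χ).prod = ρ * (χ j * (l.map χ).prod) := mul_assoc (G := G →* ℂˣ) ρ (χ j) ((l.map χ).prod)
      _ = ρ * 1 := by rw [hprodl]
      _ = ρ := mul_one ρ
  have hsuml : a j + (l.map a).sum = d :=
    (List.sum_map_erase a hjmem).trans ((Fin.sum_univ_def a).symm.trans hjunior)
  have hdpos : (0 : ℚ) < d := by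
    have h0 : 0 < d := lt_of_le_of_lt (Nat.zero_le _) (ha j)
    exact_mod_cast h0
  have hsumq : ((l.map a).sum : ℚ) / d = 1 - (a j : ℚ) / d := by
    have hc : ((l.map a).sum : ℚ) = (d : ℚ) - (a j : ℚ) := by
      have hc' : (a j : ℚ) + ((l.map a).sum : ℚ) = (d : ℚ) := by exact_mod_cast hsuml
      linarith
    rw [hc]
    field_simp
  have hle := path_le χ d a b hb l (ρ * χ j)
  rw [hend, hsumq] at hle
  have hz0 : (0 : ℚ) ≤ (z : ℚ) := Nat.cast_nonneg z
  have hz1 : (z : ℚ) ≤ 1 := by linarith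
  have hz1' : z ≤ 1 := by exact_mod_cast hz1
  have hcase : z = 0 ∨ z = 1 := by omega
  rcases hcase with h0 | h1
  · rw [h0] at hz; push_cast at hz; linarith
  · exfalso
    rw [h1] at hz; push_cast at hz
    have heq : b ((ρ * χ j) * (l.map χ).prod)
        = b (ρ * χ j) + ((l.map a).sum : ℚ) / d := by
      rw [hend, hsumq]; linarith
    have hmem := path_eq_mem χ d a b hb S hSclosed l (ρ * χ j) hτ heq
    rw [hend] at hmem
    exact hρ hmem
end

section
/- Let b : Ĝ → ℚ satisfy the gnat condition at the junior element g, with distinguished point p_b. Then p_b is indecomposable: there is no nonempty proper subset S ⊆ Ĝ such that both S and its complement Ĝ∖S are p_b-closed. -/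
open Complex

section Aux

variable {H : Type*} [CommGroup H] {n : ℕ} (χ : Fin n → H)
  (d : ℕ) (a : Fin n → ℕ) (b : H → ℚ)

/-- Total weight of a path starting at `ρ` following the indices in `L`. -/
def pathW (ρ : H) : List (Fin n) → ℚ
  | [] => 0
  | j :: L => (b ρ + (a j : ℚ) / (d : ℚ) - b (ρ * χ j)) + pathW (ρ * χ j) L

variable (hb : ∀ (ρ : H) (j : Fin n), ∃ z : ℕ,
    b ρ + (a j : ℚ) / (d : ℚ) - b (ρ * χ j) = (z : ℚ))

include hb

lemma step_nonneg (ρ : H) (j : Fin n) :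
    0 ≤ b ρ + (a j : ℚ) / (d : ℚ) - b (ρ * χ j) := by
  obtain ⟨z, hz⟩ := hb ρ j
  rw [hz]
  exact_mod_cast Nat.zero_le z

lemma pathW_nonneg (ρ : H) (L : List (Fin n)) :
    0 ≤ pathW χ d a b ρ L := by
  induction L generalizing ρ with
  | nil => simp [pathW]
  | cons j L ih =>
    have h1 := step_nonneg χ d a b hb ρ j
    have h2 := ih (ρ * χ j)
    simp only [pathW]
    linarith

omit hb in
lemma pathW_eq (ρ : H) (L : List (Fin n)) :
    pathW χ d a b ρ L
      = b ρ - b (ρ * (L.map χ).prod) + ((L.map a).sum : ℚ) / (d : ℚ) := by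
  induction L generalizing ρ with
  | nil => simp [pathW]
  | cons j L ih =>
    simp only [pathW, List.map_cons, List.prod_cons, List.sum_cons]
    rw [ih (ρ * χ j), ← mul_assoc]
    push_cast
    ring

lemma good_path {T : Set H}
    (hT : ∀ ρ ∈ T, ∀ j : Fin n, b ρ + (a j : ℚ) / (d : ℚ) = b (ρ * χ j) → ρ * χ j ∈ T)
    (ρ : H) (L : List (Fin n))
    (h0 : pathW χ d a b ρ L = 0) (hρ : ρ ∈ T) : ρ * (L.map χ).prod ∈ T := by
  induction L generalizing ρ with
  | nil => simpa using hρ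
  | cons j L ih =>
    have h1 := step_nonneg χ d a b hb ρ j
    have h2 := pathW_nonneg χ d a b hb (ρ * χ j) L
    simp only [pathW] at h0
    have hz : b ρ + (a j : ℚ) / (d : ℚ) = b (ρ * χ j) := by linarith
    have hmem : ρ * χ j ∈ T := hT ρ hρ j hz
    have := ih (ρ * χ j) (by linarith) hmem
    simpa [mul_assoc] using this

/-- Generic core of the theorem: under the gnat condition, a set closed under
good steps whose complement is also closed under good steps, containing a
point, is everything. -/
theorem main_aux (hgen : Subgroup.closure (Set.range χ) = (⊤ : Subgroup H))
    (hprod : ∏ j, χ j = 1)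
    (hd1 : 0 < d) (hjunior : ∑ j, a j = d)
    (N : ℕ) (hNpos : 0 < N) (hord : ∀ x : H, x ^ N = 1)
    (S : Set H) (ρ₀ : H) (hρ₀ : ρ₀ ∈ S)
    (hS : ∀ ρ ∈ S, ∀ j : Fin n, b ρ + (a j : ℚ) / (d : ℚ) = b (ρ * χ j) → ρ * χ j ∈ S)
    (hSc : ∀ ρ ∈ Sᶜ, ∀ j : Fin n, b ρ + (a j : ℚ) / (d : ℚ) = b (ρ * χ j) → ρ * χ j ∈ Sᶜ) :
    S = Set.univ := by
  classical
  have hdQ : (d : ℚ) ≠ 0 := by exact_mod_cast hd1.ne'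
  -- Step 1: S is closed under multiplication by each χ j.
  have hstep : ∀ ρ ∈ S, ∀ j : Fin n, ρ * χ j ∈ S := by
    intro ρ hρ j
    set L : List (Fin n) := (Finset.univ.erase j).toList with hLdef
    have hprodL : (L.map χ).prod = (χ j)⁻¹ := by
      have h1 : χ j * (L.map χ).prod = 1 := by
        rw [hLdef, Finset.prod_map_toList,
          Finset.mul_prod_erase _ _ (Finset.mem_univ j), hprod]
      exact (inv_eq_of_mul_eq_one_right h1).symm
    have hsumL : (a j : ℚ) + ((L.map a).sum : ℚ) = (d : ℚ) := by
      have h1 : a j + (L.map a).sum = d := by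
        rw [hLdef, Finset.sum_map_toList,
          Finset.add_sum_erase _ _ (Finset.mem_univ j), hjunior]
      exact_mod_cast h1
    -- total weight of the full cycle (starting with the step j) is 1
    have hcycle : pathW χ d a b ρ (j :: L) = 1 := by
      rw [pathW_eq]
      simp only [List.map_cons, List.prod_cons, List.sum_cons]
      rw [hprodL, mul_inv_cancel, mul_one]
      have hcast : ((a j + (L.map a).sum : ℕ) : ℚ) = (d : ℚ) := by
        rw [Nat.cast_add, hsumL]
      rw [hcast, div_self hdQ]
      ring
    have hsplit : pathW χ d a b ρ (j :: L)
        = (b ρ + (a j : ℚ) / (d : ℚ) - b (ρ * χ j)) + pathW χ d a b (ρ * χ j) L :=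
      rfl
    obtain ⟨z, hz⟩ := hb ρ j
    rcases Nat.eq_zero_or_pos z with hz0 | hz1
    · -- the first step is a good step, S is closed under it
      refine hS ρ hρ j ?_
      rw [hz0] at hz
      push_cast at hz
      linarith
    · -- the first step is the unique bad step; the rest of the cycle is good
      by_contra hc
      have hcm : ρ * χ j ∈ Sᶜ := hc
      have hz1' : (1 : ℚ) ≤ b ρ + (a j : ℚ) / (d : ℚ) - b (ρ * χ j) := by
        rw [hz]; exact_mod_cast hz1
      have hrest0 : pathW χ d a b (ρ * χ j) L = 0 := by
        have hnn := pathW_nonneg χ d a b hb (ρ * χ j) L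
        have h := hcycle
        rw [hsplit] at h
        linarith
      have hend : ρ * χ j * (L.map χ).prod ∈ Sᶜ :=
        good_path χ d a b hb hSc (ρ * χ j) L hrest0 hcm
      rw [hprodL, mul_assoc, mul_inv_cancel, mul_one] at hend
      exact hend hρ
  -- Step 2: closure under powers
  have hpow : ∀ x : H, (∀ ρ ∈ S, ρ * x ∈ S) → ∀ k, ∀ ρ ∈ S, ρ * x ^ k ∈ S := by
    intro x hx k
    induction k with
    | zero => intro ρ hρ; simpa using hρ
    | succ k ih =>
      intro ρ hρ
      rw [pow_succ, ← mul_assoc]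
      exact hx _ (ih ρ hρ)
  -- Step 3: S is closed under multiplication by everything in the closure, i.e. all of H
  have hall : ∀ x : H, ∀ ρ ∈ S, ρ * x ∈ S := by
    intro x
    have hx : x ∈ Subgroup.closure (Set.range χ) := by rw [hgen]; trivial
    refine Subgroup.closure_induction
      (p := fun y _ => ∀ ρ ∈ S, ρ * y ∈ S) ?_ ?_ ?_ ?_ hx
    · rintro y ⟨j, rfl⟩ ρ hρ
      exact hstep ρ hρ j
    · intro ρ hρ; simpa using hρ
    · intro y w _ _ hy hw ρ hρ
      rw [← mul_assoc]
      exact hw _ (hy ρ hρ)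
    · intro y _ hy ρ hρ
      have hinv : y⁻¹ = y ^ (N - 1) := by
        refine inv_eq_of_mul_eq_one_right ?_
        rw [← pow_succ', Nat.sub_add_cancel hNpos, hord]
      rw [hinv]
      exact hpow y hy _ ρ hρ
  ext τ
  simp only [Set.mem_univ, iff_true]
  have := hall (ρ₀⁻¹ * τ) ρ₀ hρ₀
  rwa [mul_inv_cancel_left] at this

end Aux

/-- The distinguished point of a gnat-condition family at a junior element is
indecomposable. -/
theorem stmt2 {G : Type*} [CommGroup G] [Fintype G] {n : ℕ} (hn : 1 ≤ n)
    (χ : Fin n → (G →* ℂˣ))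
    (hgen : Subgroup.closure (Set.range χ) = (⊤ : Subgroup (G →* ℂˣ)))
    (hprod : ∏ j, χ j = 1)
    (g : G) (d : ℕ) (hd : orderOf g = d)
    (a : Fin n → ℕ) (ha : ∀ j, a j < d)
    (hchi : ∀ j, ((χ j g : ℂˣ) : ℂ) =
      Complex.exp (2 * (Real.pi : ℂ) * Complex.I * (a j : ℂ) / (d : ℂ)))
    (hjunior : ∑ j, a j = d)
    (b : (G →* ℂˣ) → ℚ) (hb : GnatCond χ d a b) :
    ¬ ∃ S : Set (G →* ℂˣ), S.Nonempty ∧ S ≠ Set.univ ∧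
      PClosed χ (distPt χ d a b) S ∧ PClosed χ (distPt χ d a b) Sᶜ := by
  rintro ⟨S, ⟨ρ₀, hρ₀⟩, hSne, hS, hSc⟩
  have hd1 : 0 < d := hd ▸ orderOf_pos g
  -- every character has order dividing `card G`
  have hord : ∀ x : G →* ℂˣ, x ^ Fintype.card G = 1 := by
    intro x
    ext g'
    rw [MonoidHom.pow_apply, ← map_pow, pow_card_eq_one, map_one, MonoidHom.one_apply]
  -- translate the `PClosed` hypotheses into the form used by `main_aux`
  have hS' : ∀ ρ ∈ S, ∀ j : Fin n,
      b ρ + (a j : ℚ) / (d : ℚ) = b (ρ * χ j) → ρ * χ j ∈ S := by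
    intro ρ hρ j h
    refine hS ρ hρ j ?_
    simp only [distPt]
    rw [if_pos h]
    exact one_ne_zero
  have hSc' : ∀ ρ ∈ Sᶜ, ∀ j : Fin n,
      b ρ + (a j : ℚ) / (d : ℚ) = b (ρ * χ j) → ρ * χ j ∈ Sᶜ := by
    intro ρ hρ j h
    refine hSc ρ hρ j ?_
    simp only [distPt]
    rw [if_pos h]
    exact one_ne_zero
  exact hSne (main_aux χ d a b (fun ρ j => hb ρ j) hgen hprod hd1 hjunior (Fintype.card G)
    Fintype.card_pos hord S ρ₀ hρ₀ hS' hSc')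
end

section
/- Let b : Ĝ → ℚ satisfy the gnat condition at the junior element g, with distinguished point p_b, and let S ⊆ Ĝ be a nonempty proper p_b-closed subset containing the trivial character 1. Define b′ : Ĝ → ℚ by b′(ρ) = b(ρ) for ρ ∈ S and b′(ρ) = b(ρ) + 1 for ρ ∉ S. Then b′ again satisfies the gnat condition at g, and the complement Ĝ∖S is p_{b′}-closed, where p_{b′} is the distinguished point of b′. -/
open Complex

/-- Shifting the coefficients of a gnat family by `+1` outside a nonempty proper
`p_b`-closed subset `S` containing the trivial character again yields a gnat family,
for which the complement of `S` is closed. -/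
theorem stmt3 {G : Type*} [CommGroup G] [Fintype G] {n : ℕ} (hn : 1 ≤ n)
    (χ : Fin n → (G →* ℂˣ))
    (hgen : Subgroup.closure (Set.range χ) = (⊤ : Subgroup (G →* ℂˣ)))
    (hprod : ∏ j, χ j = 1)
    (g : G) (d : ℕ) (hd : orderOf g = d)
    (a : Fin n → ℕ) (ha : ∀ j, a j < d)
    (hchi : ∀ j, ((χ j g : ℂˣ) : ℂ) =
      Complex.exp (2 * (Real.pi : ℂ) * Complex.I * (a j : ℂ) / (d : ℂ)))
    (hjunior : ∑ j, a j = d)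
    (b : (G →* ℂˣ) → ℚ) (hb : GnatCond χ d a b)
    (S : Set (G →* ℂˣ)) (hSne : S.Nonempty) (hSproper : S ≠ Set.univ)
    (hSclosed : PClosed χ (distPt χ d a b) S)
    (h1S : (1 : G →* ℂˣ) ∈ S)
    (b' : (G →* ℂˣ) → ℚ)
    (hb'in : ∀ ρ ∈ S, b' ρ = b ρ)
    (hb'out : ∀ ρ ∉ S, b' ρ = b ρ + 1) :
    GnatCond χ d a b' ∧ PClosed χ (distPt χ d a b') Sᶜ := by
  constructor
  · intro ρ j
    obtain ⟨z, hz⟩ := hb ρ j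
    by_cases hρ : ρ ∈ S <;> by_cases hρχ : ρ * χ j ∈ S
    · exact ⟨z, by rw [hb'in ρ hρ, hb'in _ hρχ]; exact hz⟩
    · have hz0 : z ≠ 0 := by
        intro h0
        subst h0
        have heq : b ρ + (a j : ℚ) / (d : ℚ) = b (ρ * χ j) := by push_cast at hz; linarith
        have := hSclosed ρ hρ j (by simp [distPt, heq])
        exact hρχ this
      obtain ⟨w, rfl⟩ := Nat.exists_eq_succ_of_ne_zero hz0
      refine ⟨w, ?_⟩
      rw [hb'in ρ hρ, hb'out _ hρχ]
      push_cast at hz ⊢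
      linarith
    · refine ⟨z + 1, ?_⟩
      rw [hb'out ρ hρ, hb'in _ hρχ]
      push_cast
      linarith
    · refine ⟨z, ?_⟩
      rw [hb'out ρ hρ, hb'out _ hρχ]
      linarith
  · intro ρ hρ j hp
    simp only [distPt, ne_eq, ite_eq_right_iff, one_ne_zero, imp_false, not_not] at hp
    intro hmem
    obtain ⟨z, hz⟩ := hb ρ j
    rw [hb'out ρ hρ, hb'in _ hmem] at hp
    have : (0:ℚ) ≤ (z:ℚ) := Nat.cast_nonneg z
    linarith
end

section
/- Let p be a McKay-quiver point. The dimension of the ℂ-vector space of ℂ-linear endomorphisms f of ℂ^Ĝ that commute with all the operators X_1, …, X_n and with the G-action equals the number of connected components of the support graph of p. -/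
/-- A McKay-quiver point. -/
def IsMcKayPt {G : Type*} [CommGroup G] {n : ℕ} (χ : Fin n → (G →* ℂˣ))
    (p : (G →* ℂˣ) → Fin n → ℂ) : Prop :=
  ∀ (ρ : G →* ℂˣ) (j j' : Fin n),
    p (ρ * χ j) j' * p ρ j = p (ρ * χ j') j * p ρ j'

/-- The operator `X_j` on `ℂ^Ĝ` associated to `p`, determined by
`X_j (e_ρ) = p ρ j • e_{ρ·χ_j}`. -/
noncomputable def Xop {G : Type*} [CommGroup G] {n : ℕ} (χ : Fin n → (G →* ℂˣ))
    (p : (G →* ℂˣ) → Fin n → ℂ) (j : Fin n) :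
    ((G →* ℂˣ) → ℂ) →ₗ[ℂ] ((G →* ℂˣ) → ℂ) where
  toFun v := fun σ => p (σ * (χ j)⁻¹) j * v (σ * (χ j)⁻¹)
  map_add' u v := by funext σ; simp [mul_add]
  map_smul' c v := by funext σ; simp [smul_eq_mul]; ring

/-- The `G`-action operator on `ℂ^Ĝ`: `g • e_ρ = ρ(g) • e_ρ`. -/
noncomputable def Dop {G : Type*} [CommGroup G] (g : G) :
    ((G →* ℂˣ) → ℂ) →ₗ[ℂ] ((G →* ℂˣ) → ℂ) where
  toFun v := fun ρ => ((ρ g : ℂˣ) : ℂ) * v ρ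
  map_add' u v := by funext ρ; simp [mul_add]
  map_smul' c v := by funext ρ; simp [smul_eq_mul]; ring

/-- The space of `ℂ`-linear endomorphisms of `ℂ^Ĝ` commuting with all `X_j` and
with the `G`-action. -/
noncomputable def commutant {G : Type*} [CommGroup G] {n : ℕ}
    (χ : Fin n → (G →* ℂˣ)) (p : (G →* ℂˣ) → Fin n → ℂ) :
    Submodule ℂ (((G →* ℂˣ) → ℂ) →ₗ[ℂ] ((G →* ℂˣ) → ℂ)) where
  carrier := {f | (∀ j : Fin n, f ∘ₗ Xop χ p j = Xop χ p j ∘ₗ f) ∧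
    (∀ g : G, f ∘ₗ Dop g = Dop g ∘ₗ f)}
  add_mem' := by
    rintro f f' ⟨hf1, hf2⟩ ⟨hf'1, hf'2⟩
    constructor
    · intro j
      simp [LinearMap.add_comp, LinearMap.comp_add, hf1 j, hf'1 j]
    · intro g
      simp [LinearMap.add_comp, LinearMap.comp_add, hf2 g, hf'2 g]
  zero_mem' := by
    constructor <;> intro _ <;>
      simp [LinearMap.zero_comp, LinearMap.comp_zero]
  smul_mem' := by
    rintro c f ⟨h1, h2⟩
    constructor
    · intro j
      simp [LinearMap.smul_comp, LinearMap.comp_smul, h1 j]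
    · intro g
      simp [LinearMap.smul_comp, LinearMap.comp_smul, h2 g]

/-- The support graph of `p`: vertices `Ĝ`, an edge joining `ρ` and `ρ·χ_j`
whenever `p ρ j ≠ 0`. -/
def supportGraph {G : Type*} [CommGroup G] {n : ℕ} (χ : Fin n → (G →* ℂˣ))
    (p : (G →* ℂˣ) → Fin n → ℂ) : SimpleGraph (G →* ℂˣ) :=
  SimpleGraph.fromRel (fun ρ σ => ∃ j : Fin n, p ρ j ≠ 0 ∧ σ = ρ * χ j)

section Aux

variable {G : Type*} [CommGroup G] {n : ℕ}

noncomputable def eVec [DecidableEq (G →* ℂˣ)] (ρ : G →* ℂˣ) : (G →* ℂˣ) → ℂ :=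
  Pi.single ρ 1

theorem eVec_apply [DecidableEq (G →* ℂˣ)] (ρ τ : G →* ℂˣ) :
    eVec ρ τ = if τ = ρ then 1 else 0 := by
  simp [eVec, Pi.single_apply]

noncomputable def diagOp (c : (G →* ℂˣ) → ℂ) :
    ((G →* ℂˣ) → ℂ) →ₗ[ℂ] ((G →* ℂˣ) → ℂ) where
  toFun v := fun ρ => c ρ * v ρ
  map_add' u v := by funext ρ; simp [mul_add]
  map_smul' a v := by funext ρ; simp [smul_eq_mul]; ring

theorem aux_finite [Fintype G] : Finite (G →* ℂˣ) := by
  have hcard : 0 < Fintype.card G := Fintype.card_pos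
  let k : ℕ+ := ⟨Fintype.card G, hcard⟩
  have : Function.Injective (fun (ρ : G →* ℂˣ) => (fun g => (⟨ρ g, by
      simp [mem_rootsOfUnity, k, ← map_pow, pow_card_eq_one]⟩ : rootsOfUnity k ℂ) : G → rootsOfUnity k ℂ)) := by
    intro ρ σ h
    ext g
    exact congrArg (Units.val ∘ Subtype.val) (congrFun h g)
  exact Finite.of_injective _ this

theorem diag_mem (χ : Fin n → (G →* ℂˣ)) (p : (G →* ℂˣ) → Fin n → ℂ)
    (c : (G →* ℂˣ) → ℂ) (hc : ∀ (ρ : G →* ℂˣ) (j : Fin n), p ρ j ≠ 0 → c ρ = c (ρ * χ j)) :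
    diagOp c ∈ commutant χ p := by
  constructor
  · intro j
    apply LinearMap.ext; intro v; funext σ
    simp only [LinearMap.comp_apply, diagOp, Xop, LinearMap.coe_mk, AddHom.coe_mk]
    by_cases h : p (σ * (χ j)⁻¹) j = 0
    · simp [h]
    · have hcc := hc (σ * (χ j)⁻¹) j h
      have e : σ * (χ j)⁻¹ * χ j = σ := inv_mul_cancel_right σ (χ j)
      rw [e] at hcc
      rw [← hcc]; ring
  · intro g
    apply LinearMap.ext; intro v; funext ρ
    simp only [LinearMap.comp_apply, diagOp, Dop, LinearMap.coe_mk, AddHom.coe_mk]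
    ring

theorem offdiag [DecidableEq (G →* ℂˣ)] (χ : Fin n → (G →* ℂˣ)) (p : (G →* ℂˣ) → Fin n → ℂ)
    (f : ((G →* ℂˣ) → ℂ) →ₗ[ℂ] ((G →* ℂˣ) → ℂ)) (hf : f ∈ commutant χ p)
    {ρ σ : G →* ℂˣ} (h : ρ ≠ σ) : f (eVec ρ) σ = 0 := by
  obtain ⟨g, hg⟩ : ∃ g, ρ g ≠ σ g := by
    by_contra hc
    push_neg at hc
    exact h (MonoidHom.ext hc)
  have hg' : ((ρ g : ℂˣ) : ℂ) ≠ ((σ g : ℂˣ) : ℂ) := fun hh => hg (Units.ext hh)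
  have key := congrFun (congrArg (fun F => F (eVec ρ)) (hf.2 g)) σ
  simp only [LinearMap.comp_apply, Dop, LinearMap.coe_mk, AddHom.coe_mk] at key
  have hD : (fun τ => ((τ g : ℂˣ) : ℂ) * eVec ρ τ) = ((ρ g : ℂˣ) : ℂ) • eVec ρ := by
    funext τ
    by_cases hτ : τ = ρ
    · subst hτ; simp
    · simp [eVec_apply, hτ]
  rw [hD, map_smul] at key
  simp only [Pi.smul_apply, smul_eq_mul] at key
  by_contra hzero
  exact hg' (mul_right_cancel₀ hzero key)

theorem diag_value [DecidableEq (G →* ℂˣ)] (χ : Fin n → (G →* ℂˣ)) (p : (G →* ℂˣ) → Fin n → ℂ)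
    (f : ((G →* ℂˣ) → ℂ) →ₗ[ℂ] ((G →* ℂˣ) → ℂ)) (hf : f ∈ commutant χ p)
    (ρ : G →* ℂˣ) (j : Fin n) (hpj : p ρ j ≠ 0) :
    f (eVec ρ) ρ = f (eVec (ρ * χ j)) (ρ * χ j) := by
  have key := congrFun (congrArg (fun F => F (eVec ρ)) (hf.1 j)) (ρ * χ j)
  simp only [LinearMap.comp_apply, Xop, LinearMap.coe_mk, AddHom.coe_mk] at key
  have hX : (fun σ => p (σ * (χ j)⁻¹) j * eVec ρ (σ * (χ j)⁻¹))
      = (p ρ j) • eVec (ρ * χ j) := by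
    funext σ
    by_cases hσ : σ = ρ * χ j
    · subst hσ
      have e : ρ * χ j * (χ j)⁻¹ = ρ := mul_inv_cancel_right ρ (χ j)
      simp [e, eVec_apply]
    · have hne : σ * (χ j)⁻¹ ≠ ρ := by
        intro hh
        apply hσ
        rw [← hh]
        exact (inv_mul_cancel_right σ (χ j)).symm
      simp [eVec_apply, hne, hσ]
  rw [hX, map_smul] at key
  have e : ρ * χ j * (χ j)⁻¹ = ρ := mul_inv_cancel_right ρ (χ j)
  simp only [Pi.smul_apply, smul_eq_mul, e] at key
  exact (mul_left_cancel₀ hpj key).symm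

theorem f_diagonal [Fintype G] [DecidableEq (G →* ℂˣ)]
    (χ : Fin n → (G →* ℂˣ)) (p : (G →* ℂˣ) → Fin n → ℂ)
    (f : ((G →* ℂˣ) → ℂ) →ₗ[ℂ] ((G →* ℂˣ) → ℂ)) (hf : f ∈ commutant χ p)
    (v : (G →* ℂˣ) → ℂ) (σ : G →* ℂˣ) :
    f v σ = f (eVec σ) σ * v σ := by
  haveI : Finite (G →* ℂˣ) := aux_finite
  haveI : Fintype (G →* ℂˣ) := Fintype.ofFinite _
  have hv : v = ∑ ρ : (G →* ℂˣ), v ρ • eVec ρ := by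
    funext τ
    rw [Finset.sum_apply]
    rw [Finset.sum_eq_single τ]
    · simp [eVec_apply]
    · intro ρ _ hρ
      simp [eVec_apply, Ne.symm hρ]
    · intro h; exact absurd (Finset.mem_univ τ) h
  calc f v σ = ∑ ρ : (G →* ℂˣ), v ρ * f (eVec ρ) σ := by
        conv_lhs => rw [hv]
        rw [map_sum, Finset.sum_apply]
        simp
    _ = f (eVec σ) σ * v σ := by
        rw [Finset.sum_eq_single σ]
        · ring
        · intro ρ _ hρ
          rw [offdiag χ p f hf hρ]; ring
        · intro h; exact absurd (Finset.mem_univ σ) h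

end Aux

/-- The dimension of the commutant of a McKay-quiver point equals the number of
connected components of its support graph. -/
theorem stmt5 {G : Type*} [CommGroup G] [Fintype G] {n : ℕ} (hn : 1 ≤ n)
    (χ : Fin n → (G →* ℂˣ))
    (p : (G →* ℂˣ) → Fin n → ℂ) (hp : IsMcKayPt χ p) :
    Module.finrank ℂ (commutant χ p) =
      Nat.card (supportGraph χ p).ConnectedComponent := by
  classical
  haveI : Finite (G →* ℂˣ) := aux_finite
  haveI : Fintype (G →* ℂˣ) := Fintype.ofFinite _
  haveI : Finite (supportGraph χ p).ConnectedComponent :=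
    Finite.of_surjective _ Quot.mk_surjective
  haveI : Fintype (supportGraph χ p).ConnectedComponent := Fintype.ofFinite _
  let Φ : ((supportGraph χ p).ConnectedComponent → ℂ) →ₗ[ℂ] commutant χ p :=
    { toFun := fun d => ⟨diagOp (fun ρ => d ((supportGraph χ p).connectedComponentMk ρ)),
        diag_mem χ p _ (by
          intro ρ j hpj
          by_cases h : ρ = ρ * χ j
          · rw [← h]
          · apply congrArg
            apply SimpleGraph.ConnectedComponent.sound
            apply SimpleGraph.Adj.reachable
            rw [supportGraph, SimpleGraph.fromRel_adj]
            exact ⟨h, Or.inl ⟨j, hpj, rfl⟩⟩)⟩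
      map_add' := by
        intro d d'
        apply Subtype.ext
        apply LinearMap.ext; intro v; funext σ
        simp [diagOp, add_mul]
      map_smul' := by
        intro a d
        apply Subtype.ext
        apply LinearMap.ext; intro v; funext σ
        simp [diagOp]; ring }
  have hinj : Function.Injective Φ := by
    intro d d' h
    have h1 : diagOp (fun ρ => d ((supportGraph χ p).connectedComponentMk ρ))
        = diagOp (fun ρ => d' ((supportGraph χ p).connectedComponentMk ρ)) :=
      congrArg Subtype.val h
    funext c
    obtain ⟨ρ, rfl⟩ := Quot.exists_rep c
    have h2 := congrFun (congrArg (fun (F : ((G →* ℂˣ) → ℂ) →ₗ[ℂ] ((G →* ℂˣ) → ℂ)) =>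
      F (eVec ρ)) h1) ρ
    simp [diagOp, eVec_apply] at h2
    exact h2
  have hsurj : Function.Surjective Φ := by
    rintro ⟨f, hf⟩
    set d0 : (G →* ℂˣ) → ℂ := fun ρ => f (eVec ρ) ρ with hd0
    have hadj : ∀ ρ σ, (supportGraph χ p).Adj ρ σ → d0 ρ = d0 σ := by
      intro ρ σ h
      rw [supportGraph, SimpleGraph.fromRel_adj] at h
      obtain ⟨hne, h | h⟩ := h
      · obtain ⟨j, hpj, rfl⟩ := h
        exact diag_value χ p f hf ρ j hpj
      · obtain ⟨j, hpj, rfl⟩ := h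
        exact (diag_value χ p f hf σ j hpj).symm
    have hwalk : ∀ (v w : G →* ℂˣ) (q : (supportGraph χ p).Walk v w), d0 v = d0 w := by
      intro v w q
      induction q with
      | nil => rfl
      | cons h q ih => exact (hadj _ _ h).trans ih
    refine ⟨SimpleGraph.ConnectedComponent.lift d0 (fun v w q _ => hwalk v w q), ?_⟩
    apply Subtype.ext
    apply LinearMap.ext; intro v; funext σ
    have hdg := f_diagonal χ p f hf v σ
    simp only [diagOp, LinearMap.coe_mk, AddHom.coe_mk, Φ]
    rw [hdg]
    rfl
  have E := LinearEquiv.ofBijective Φ ⟨hinj, hsurj⟩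
  rw [E.symm.finrank_eq, Module.finrank_pi, Nat.card_eq_fintype_card]
end

section
/- Let p and q be McKay-quiver points, with associated operators X_j^{(p)} and X_j^{(q)} on ℂ^Ĝ. There exists a ℂ-linear automorphism f of ℂ^Ĝ satisfying f ∘ X_j^{(p)} = X_j^{(q)} ∘ f for all j ∈ {1,…,n} and commuting with the G-action, if and only if there exists t ∈ T with q = t·p, i.e. q(ρ, j) = t(ρ)^{-1}·t(ρ·χ_j)·p(ρ, j) for all ρ ∈ Ĝ and all j. -/
lemma Xop_single {G : Type*} [CommGroup G] [DecidableEq (G →* ℂˣ)] {n : ℕ} (χ : Fin n → (G →* ℂˣ))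
    (p : (G →* ℂˣ) → Fin n → ℂ) (j : Fin n) (ρ : G →* ℂˣ) :
    Xop χ p j (Pi.single ρ (1 : ℂ)) =
      p ρ j • (Pi.single (ρ * χ j) (1 : ℂ) : (G →* ℂˣ) → ℂ) := by
  funext σ
  simp only [Xop, LinearMap.coe_mk, AddHom.coe_mk, Pi.smul_apply, smul_eq_mul]
  by_cases h : σ = ρ * χ j
  · subst h
    have h1 : ρ * χ j * (χ j)⁻¹ = ρ := mul_inv_cancel_right ρ (χ j)
    rw [h1]
    simp
  · have h' : σ * (χ j)⁻¹ ≠ ρ := by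
      intro hcc
      exact h (by rw [← hcc]; exact (inv_mul_cancel_right σ (χ j)).symm)
    rw [Pi.single_eq_of_ne h', Pi.single_eq_of_ne h]
    ring

/-- Two McKay-quiver points are intertwined by a `G`-equivariant linear automorphism
of `ℂ^Ĝ` iff they lie in the same `T`-orbit. -/
theorem stmt8 {G : Type*} [CommGroup G] [Fintype G] {n : ℕ} (hn : 1 ≤ n)
    (χ : Fin n → (G →* ℂˣ))
    (p q : (G →* ℂˣ) → Fin n → ℂ)
    (hp : IsMcKayPt χ p) (hq : IsMcKayPt χ q) :
    (∃ f : ((G →* ℂˣ) → ℂ) ≃ₗ[ℂ] ((G →* ℂˣ) → ℂ),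
        (∀ (j : Fin n) (v : (G →* ℂˣ) → ℂ), f (Xop χ p j v) = Xop χ q j (f v)) ∧
        (∀ (g : G) (v : (G →* ℂˣ) → ℂ), f (Dop g v) = Dop g (f v))) ↔
    (∃ t : (G →* ℂˣ) → ℂˣ, ∀ (ρ : G →* ℂˣ) (j : Fin n),
        q ρ j = ((t ρ : ℂ))⁻¹ * (t (ρ * χ j) : ℂ) * p ρ j) := by
  classical
  constructor
  · rintro ⟨f, hfX, hfD⟩
    set e : (G →* ℂˣ) → ((G →* ℂˣ) → ℂ) := fun ρ => Pi.single ρ (1 : ℂ) with he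
    -- f is diagonal on single basis vectors
    have hdiag : ∀ ρ σ, σ ≠ ρ → f (e ρ) σ = 0 := by
      intro ρ σ hne
      obtain ⟨g, hg⟩ : ∃ g, ρ g ≠ σ g := by
        by_contra h
        push_neg at h
        exact hne (MonoidHom.ext h).symm
      have hD : Dop g (e ρ) = ((ρ g : ℂˣ) : ℂ) • e ρ := by
        funext τ
        simp only [Dop, LinearMap.coe_mk, AddHom.coe_mk, Pi.smul_apply, smul_eq_mul, he]
        by_cases h : τ = ρ
        · subst h; rfl
        · rw [Pi.single_eq_of_ne h]; ring
      have h1 : f (Dop g (e ρ)) σ = Dop g (f (e ρ)) σ := by rw [hfD]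
      rw [hD, map_smul] at h1
      simp only [Dop, LinearMap.coe_mk, AddHom.coe_mk, Pi.smul_apply, smul_eq_mul] at h1
      have hgc : ((ρ g : ℂˣ) : ℂ) ≠ ((σ g : ℂˣ) : ℂ) := by
        intro hc; exact hg (Units.ext hc)
      have := sub_eq_zero.mpr h1
      rw [← sub_mul] at this
      rcases mul_eq_zero.mp this with h | h
      · exact absurd (sub_eq_zero.mp h) hgc
      · exact h
    set c : (G →* ℂˣ) → ℂ := fun ρ => f (e ρ) ρ with hc
    have hfe : ∀ ρ, f (e ρ) = c ρ • e ρ := by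
      intro ρ
      funext σ
      by_cases h : σ = ρ
      · subst h; simp [he, hc]
      · rw [hdiag ρ σ h]
        simp [he, Pi.single_eq_of_ne h]
    have hcne : ∀ ρ, c ρ ≠ 0 := by
      intro ρ hzero
      have : f (e ρ) = 0 := by rw [hfe ρ, hzero, zero_smul]
      have he0 : e ρ = 0 := f.injective (by simp [this])
      have : e ρ ρ = (0 : ℂ) := by rw [he0]; rfl
      simp [he] at this
    refine ⟨fun ρ => Units.mk0 (c ρ) (hcne ρ), ?_⟩
    intro ρ j
    have key := congrFun (hfX j (e ρ)) (ρ * χ j)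
    simp only [he] at key
    rw [Xop_single, map_smul, hfe, hfe, map_smul] at key
    simp only [he] at key
    rw [Xop_single] at key
    simp only [Pi.smul_apply, smul_eq_mul, Pi.single_eq_same] at key
    -- key : p ρ j * (c (ρ * χ j) * 1) = c ρ * (q ρ j * 1)
    simp only [mul_one] at key
    field_simp [Units.val_mk0]
    rw [Units.val_mk0, Units.val_mk0, eq_div_iff (hcne ρ)]
    linear_combination -key
  · rintro ⟨t, ht⟩
    refine ⟨{ toFun := fun v ρ => (t ρ : ℂ) * v ρ
              map_add' := by intro u v; funext ρ; simp [mul_add]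
              map_smul' := by intro a v; funext ρ; simp [smul_eq_mul]; ring
              invFun := fun v ρ => ((t ρ : ℂ))⁻¹ * v ρ
              left_inv := by
                intro v; funext ρ
                simp [inv_mul_cancel_left₀ (Units.ne_zero (t ρ))]
              right_inv := by
                intro v; funext ρ
                simp [mul_inv_cancel_left₀ (Units.ne_zero (t ρ))] }, ?_, ?_⟩
    · intro j v
      funext σ
      simp only [Xop, LinearMap.coe_mk, AddHom.coe_mk, LinearEquiv.coe_mk]
      rw [ht (σ * (χ j)⁻¹) j]
      have hσ : σ * (χ j)⁻¹ * χ j = σ := inv_mul_cancel_right σ (χ j)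
      rw [hσ]
      field_simp
    · intro g v
      funext ρ
      simp only [Dop, LinearMap.coe_mk, AddHom.coe_mk, LinearEquiv.coe_mk]
      ring
end

section
/- Let p be a McKay-quiver point and let Stab(p) = {t ∈ T : t·p = p} be its stabilizer. Then Stab(p) contains the subgroup Δ of constant functions, and the quotient group Stab(p)/Δ is finite if and only if p is indecomposable (i.e. there is no nonempty proper subset S ⊆ Ĝ such that both S and its complement Ĝ∖S are p-closed). -/
/-- The action of `T = (ℂˣ)^Ĝ` on McKay-quiver points:
`(t·p)(ρ, j) = t(ρ)⁻¹ · t(ρ·χ_j) · p(ρ, j)`. -/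
noncomputable def Tact {G : Type*} [CommGroup G] {n : ℕ} (χ : Fin n → (G →* ℂˣ))
    (t : (G →* ℂˣ) → ℂˣ) (p : (G →* ℂˣ) → Fin n → ℂ) :
    (G →* ℂˣ) → Fin n → ℂ :=
  fun ρ j => ((t ρ : ℂ))⁻¹ * (t (ρ * χ j) : ℂ) * p ρ j

/-- The stabilizer `Stab(p) = {t ∈ T : t·p = p}` as a subgroup of `T`. -/
noncomputable def stab {G : Type*} [CommGroup G] {n : ℕ} (χ : Fin n → (G →* ℂˣ))
    (p : (G →* ℂˣ) → Fin n → ℂ) : Subgroup ((G →* ℂˣ) → ℂˣ) where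
  carrier := {t | Tact χ t p = p}
  one_mem' := by
    funext ρ j
    simp [Tact]
  mul_mem' := by
    intro s t hs ht
    funext ρ j
    have hs' := congrFun (congrFun hs ρ) j
    have ht' := congrFun (congrFun ht ρ) j
    simp only [Tact, Pi.mul_apply, Units.val_mul] at *
    have e1 : ((s ρ : ℂ) * (t ρ : ℂ))⁻¹ * ((s (ρ * χ j) : ℂ) * (t (ρ * χ j) : ℂ)) * p ρ j
        = (s ρ : ℂ)⁻¹ * (s (ρ * χ j) : ℂ) * ((t ρ : ℂ)⁻¹ * (t (ρ * χ j) : ℂ) * p ρ j) := by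
      rw [mul_inv]; ring
    rw [e1, ht', hs']
  inv_mem' := by
    intro t ht
    funext ρ j
    have ht' := congrFun (congrFun ht ρ) j
    simp only [Tact, Pi.inv_apply, Units.val_inv_eq_inv_val] at *
    have h1 : (t ρ : ℂ) ≠ 0 := Units.ne_zero _
    have h2 : (t (ρ * χ j) : ℂ) ≠ 0 := Units.ne_zero _
    field_simp at ht' ⊢
    first | linear_combination -ht' | linear_combination ht'

/-- The subgroup `Δ ⊆ T` of constant functions. -/
noncomputable def Delta (G : Type*) [CommGroup G] : Subgroup ((G →* ℂˣ) → ℂˣ) where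
  carrier := {t | ∃ c : ℂˣ, t = fun _ => c}
  one_mem' := ⟨1, rfl⟩
  mul_mem' := by
    rintro s t ⟨c, rfl⟩ ⟨c', rfl⟩
    exact ⟨c * c', rfl⟩
  inv_mem' := by
    rintro t ⟨c, rfl⟩
    exact ⟨c⁻¹, rfl⟩

lemma mem_stab_iff {G : Type*} [CommGroup G] {n : ℕ} (χ : Fin n → (G →* ℂˣ))
    (p : (G →* ℂˣ) → Fin n → ℂ) (t : (G →* ℂˣ) → ℂˣ) :
    t ∈ stab χ p ↔ ∀ (ρ : G →* ℂˣ) (j : Fin n), p ρ j ≠ 0 → t (ρ * χ j) = t ρ := by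
  constructor
  · intro h ρ j hne
    have h' := congrFun (congrFun (show Tact χ t p = p from h) ρ) j
    simp only [Tact] at h'
    have h1 : (t ρ : ℂ) ≠ 0 := Units.ne_zero _
    apply Units.ext
    have h2 : ((t ρ : ℂ))⁻¹ * (t (ρ * χ j) : ℂ) = 1 :=
      mul_right_cancel₀ hne (by rw [h', one_mul])
    exact ((inv_mul_eq_one₀ h1).mp h2).symm
  · intro h
    show Tact χ t p = p
    funext ρ j
    by_cases hne : p ρ j = 0
    · simp [Tact, hne]
    · simp only [Tact, h ρ j hne]
      field_simp

noncomputable instance : Infinite ℂˣ :=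
  Infinite.of_injective (fun n : ℕ => Units.mk0 ((n : ℂ) + 1) (by
    have : (0:ℝ) < (n:ℝ) + 1 := by positivity
    intro hc
    have : ((n : ℂ) + 1).re = 0 := by rw [hc]; simp
    simp at this
    exact absurd this (by positivity)))
    (by
      intro a b hab
      have := congrArg (fun u : ℂˣ => (u : ℂ)) hab
      simp only [Units.val_mk0, add_left_inj] at this
      exact_mod_cast this)

/-- `Stab(p)` contains `Δ`, and `Stab(p)/Δ` is finite iff `p` is indecomposable. -/
theorem stmt9 {G : Type*} [CommGroup G] [Fintype G] {n : ℕ} (hn : 1 ≤ n)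
    (χ : Fin n → (G →* ℂˣ))
    (p : (G →* ℂˣ) → Fin n → ℂ) (hp : IsMcKayPt χ p) :
    Delta G ≤ stab χ p ∧
    (Finite ((stab χ p) ⧸ ((Delta G).subgroupOf (stab χ p))) ↔
      ¬ ∃ S : Set (G →* ℂˣ), S.Nonempty ∧ S ≠ Set.univ ∧
        PClosed χ p S ∧ PClosed χ p Sᶜ) := by
  classical
  have hdelta : Delta G ≤ stab χ p := by
    rintro t ⟨c, rfl⟩
    rw [mem_stab_iff]
    intro ρ j _
    rfl
  refine ⟨hdelta, ?_, ?_⟩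
  · -- finite → indecomposable
    intro hfin
    rintro ⟨S, ⟨ρ₀, hρ₀⟩, hSne, hS, hSc⟩
    obtain ⟨ρ₁, hρ₁⟩ := Set.ne_univ_iff_exists_notMem S |>.mp hSne
    have hmem : ∀ c : ℂˣ, (fun ρ => if ρ ∈ S then c else 1) ∈ stab χ p := by
      intro c
      rw [mem_stab_iff]
      intro ρ j hne
      by_cases hρ : ρ ∈ S
      · simp [hρ, hS ρ hρ j hne]
      · have h1 : ρ ∈ Sᶜ := hρ
        have h2 : ρ * χ j ∉ S := hSc ρ h1 j hne
        simp [hρ, h2]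
    haveI := hfin
    set N := (Delta G).subgroupOf (stab χ p)
    have hinj : Function.Injective
        (fun c : ℂˣ => (QuotientGroup.mk (⟨_, hmem c⟩ : stab χ p) :
          (stab χ p) ⧸ N)) := by
      intro c c' h
      rw [QuotientGroup.eq] at h
      rw [Subgroup.mem_subgroupOf] at h
      obtain ⟨d, hd⟩ := h
      have hd0 := congrFun hd ρ₀
      have hd1 := congrFun hd ρ₁
      simp only [Subgroup.coe_mul, Subgroup.coe_inv, Pi.mul_apply, Pi.inv_apply] at hd0 hd1
      simp only [hρ₀, hρ₁, if_pos, if_neg, if_true] at hd0 hd1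
      have hd1' : d = 1 := by simpa using hd1.symm
      rw [hd1'] at hd0
      exact inv_mul_eq_one.mp hd0
    haveI := Finite.of_injective _ hinj
    exact not_finite ℂˣ
  · -- indecomposable → finite
    intro hind
    have hle : stab χ p ≤ Delta G := by
      intro t ht
      rw [mem_stab_iff] at ht
      set S : Set (G →* ℂˣ) := {ρ | t ρ = t 1} with hSdef
      have hSuniv : S = Set.univ := by
        by_contra hne
        exact hind ⟨S, ⟨1, rfl⟩, hne,
          fun ρ hρ j hj => by
            show t (ρ * χ j) = t 1
            rw [ht ρ j hj]; exact hρ,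
          fun ρ hρ j hj => by
            show ¬ t (ρ * χ j) = t 1
            rw [ht ρ j hj]; exact hρ⟩
      refine ⟨t 1, ?_⟩
      funext ρ
      have : ρ ∈ S := hSuniv ▸ Set.mem_univ ρ
      exact this
    have : (Delta G).subgroupOf (stab χ p) = ⊤ :=
      Subgroup.subgroupOf_eq_top.mpr hle
    rw [this]
    haveI := QuotientGroup.subsingleton_quotient_top (G := stab χ p)
    exact Finite.of_subsingleton
end

section
/- Endow the space of all functions Ĝ × {1,…,n} → ℂ with its Euclidean topology. Let p be a McKay-quiver point and suppose a McKay-quiver point q lies in the closure of the orbit T·p but q ∉ T·p. Then q is decomposable: there exists a nonempty proper subset S ⊆ Ĝ such that both S and its complement Ĝ∖S are q-closed. -/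
private lemma finite_char {G : Type*} [CommGroup G] [Fintype G] : Finite (G →* ℂˣ) := by
  have hinj : Function.Injective
      (fun f : G →* ℂˣ => (fun g : G => (⟨f g, by
        simp [mem_rootsOfUnity]
        rw [← map_pow]
        simp [pow_card_eq_one]⟩ : rootsOfUnity (Fintype.card G) ℂ))) := by
    intro f f' h
    ext g
    have := congrFun h g
    simpa [Subtype.ext_iff, Units.ext_iff] using this
  exact Finite.of_injective _ hinj

open Filter Topology in
/-- A McKay-quiver point lying in the closure of the `T`-orbit of `p` but not in the
orbit itself is decomposable. -/
theorem stmt10 {G : Type*} [CommGroup G] [Fintype G] {n : ℕ} (hn : 1 ≤ n)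
    (χ : Fin n → (G →* ℂˣ))
    (p q : (G →* ℂˣ) → Fin n → ℂ)
    (hp : IsMcKayPt χ p) (hq : IsMcKayPt χ q)
    (hclos : q ∈ closure {q' : (G →* ℂˣ) → Fin n → ℂ | ∃ t, q' = Tact χ t p})
    (hnot : q ∉ {q' : (G →* ℂˣ) → Fin n → ℂ | ∃ t, q' = Tact χ t p}) :
    ∃ S : Set (G →* ℂˣ), S.Nonempty ∧ S ≠ Set.univ ∧
      PClosed χ q S ∧ PClosed χ q Sᶜ := by
  classical
  haveI : Finite (G →* ℂˣ) := finite_char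
  by_contra hcon
  push_neg at hcon
  -- the "support graph" of q
  set E : (G →* ℂˣ) → (G →* ℂˣ) → Prop :=
    fun ρ ρ' => ∃ j, q ρ j ≠ 0 ∧ ρ' = ρ * χ j with hE
  set S0 : Set (G →* ℂˣ) := {ρ | Relation.EqvGen E 1 ρ} with hS0
  have hS0closed : PClosed χ q S0 := by
    intro ρ hρ j hj
    exact Relation.EqvGen.trans _ _ _ hρ (Relation.EqvGen.rel _ _ ⟨j, hj, rfl⟩)
  have hS0cclosed : PClosed χ q S0ᶜ := by
    intro ρ hρ j hj hmem
    exact hρ (Relation.EqvGen.trans _ _ _ hmem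
      (Relation.EqvGen.symm _ _ (Relation.EqvGen.rel _ _ ⟨j, hj, rfl⟩)))
  -- the support graph is connected
  have huniv : ∀ ρ, Relation.EqvGen E 1 ρ := by
    by_contra h
    push_neg at h
    obtain ⟨ρ, hρ⟩ := h
    exact hcon S0 ⟨1, Relation.EqvGen.refl 1⟩
      (fun h => hρ (Set.eq_univ_iff_forall.mp h ρ)) hS0closed hS0cclosed
  -- extract a convergent sequence from the closure
  obtain ⟨x, hxmem, hxlim⟩ := mem_closure_iff_seq_limit.mp hclos
  choose t hxt using hxmem
  have hcoord : ∀ ρ j, Tendsto (fun k => x k ρ j) atTop (𝓝 (q ρ j)) := by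
    intro ρ j
    exact tendsto_pi_nhds.mp (tendsto_pi_nhds.mp hxlim ρ) j
  -- normalized ratios converge along connected components
  have key : ∀ ρ ρ', Relation.EqvGen E ρ ρ' → ∃ c : ℂ, c ≠ 0 ∧
      Tendsto (fun k => ((t k ρ : ℂ))⁻¹ * ((t k ρ' : ℂ))) atTop (𝓝 c) := by
    intro ρ ρ' h
    induction h with
    | rel a b hab =>
        obtain ⟨j, hqj, rfl⟩ := hab
        have hpj : p a j ≠ 0 := by
          intro hp0
          have hx0 : Tendsto (fun k => x k a j) atTop (𝓝 0) := by
            have hz : (fun k => x k a j) = fun _ => (0 : ℂ) :=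
              funext fun k => by rw [hxt k]; simp [Tact, hp0]
            rw [hz]; exact tendsto_const_nhds
          exact hqj (tendsto_nhds_unique (hcoord a j) hx0)
        refine ⟨q a j / p a j, div_ne_zero hqj hpj, ?_⟩
        have heq : ∀ k, ((t k a : ℂ))⁻¹ * ((t k (a * χ j) : ℂ)) = x k a j / p a j := by
          intro k
          rw [hxt k]
          simp only [Tact]
          field_simp
        simp only [heq]
        exact (hcoord a j).div_const _
    | refl a =>
        refine ⟨1, one_ne_zero, ?_⟩
        have hz : (fun k => ((t k a : ℂ))⁻¹ * ((t k a : ℂ))) = fun _ => (1 : ℂ) :=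
          funext fun k => inv_mul_cancel₀ (Units.ne_zero _)
        rw [hz]; exact tendsto_const_nhds
    | symm a b _ ih =>
        obtain ⟨c, hc, hten⟩ := ih
        refine ⟨c⁻¹, inv_ne_zero hc, ?_⟩
        have hz : (fun k => ((t k b : ℂ))⁻¹ * ((t k a : ℂ)))
            = fun k => (((t k a : ℂ))⁻¹ * ((t k b : ℂ)))⁻¹ :=
          funext fun k => by rw [mul_inv, inv_inv, mul_comm]
        rw [hz]; exact hten.inv₀ hc
    | trans a b c' _ _ ih1 ih2 =>
        obtain ⟨c1, hc1, h1⟩ := ih1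
        obtain ⟨c2, hc2, h2⟩ := ih2
        refine ⟨c1 * c2, mul_ne_zero hc1 hc2, ?_⟩
        have hz : (fun k => ((t k a : ℂ))⁻¹ * ((t k c' : ℂ)))
            = fun k => (((t k a : ℂ))⁻¹ * ((t k b : ℂ)))
                * (((t k b : ℂ))⁻¹ * ((t k c' : ℂ))) := by
          funext k
          have hb : ((t k b : ℂ)) ≠ 0 := Units.ne_zero _
          field_simp
        rw [hz]; exact h1.mul h2
  choose c hc0 hcten using fun ρ => key 1 ρ (huniv ρ)
  refine hnot ⟨fun ρ => Units.mk0 (c ρ) (hc0 ρ), ?_⟩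
  funext ρ j
  have h1 : Tendsto (fun k => x k ρ j) atTop (𝓝 ((c ρ)⁻¹ * c (ρ * χ j) * p ρ j)) := by
    have heq : ∀ k, x k ρ j
        = (((t k 1 : ℂ))⁻¹ * ((t k ρ : ℂ)))⁻¹
            * (((t k 1 : ℂ))⁻¹ * ((t k (ρ * χ j) : ℂ))) * p ρ j := by
      intro k
      rw [hxt k]
      simp only [Tact]
      have h1' : ((t k 1 : ℂ)) ≠ 0 := Units.ne_zero _
      have h2' : ((t k ρ : ℂ)) ≠ 0 := Units.ne_zero _
      field_simp
    simp only [heq]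
    exact ((((hcten ρ).inv₀ (hc0 ρ)).mul (hcten (ρ * χ j))).mul_const _)
  have := tendsto_nhds_unique (hcoord ρ j) h1
  simpa [Tact] using this
end

section
/- Fix m ≥ 1, positive integers r_1, …, r_m, and non-negative integers a_{j,k} for 1 ≤ j ≤ n and 1 ≤ k ≤ m. Suppose b : Ĝ × {1,…,m} → ℚ satisfies: for all ρ ∈ Ĝ, all j ∈ {1,…,n} and all k ∈ {1,…,m}, the number b(ρ, k) + a_{j,k}/r_k − b(ρ·χ_j, k) is a non-negative integer. Then for every ρ ∈ Ĝ and every j ∈ {1,…,n}, the numbers c_k := r_k·(b(ρ·χ_j, k) − b(ρ, k)) are integers satisfying c_k ≤ a_{j,k} and c_k ≡ a_{j,k} (mod r_k), and the element x_j·t_1^{c_1}⋯t_m^{c_m} of R = ℂ[x_1, …, x_n, t_1^{±1}, …, t_m^{±1}] lies in the ℂ-subalgebra of R generated by the elements x_{j′}·t_1^{a_{j′,1}}⋯t_m^{a_{j′,m}} for 1 ≤ j′ ≤ n together with the elements t_k^{−r_k} for 1 ≤ k ≤ m. -/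
/-- The Laurent polynomial algebra `R = ℂ[x_1,…,x_n,t_1^{±1},…,t_m^{±1}]`, as the
monoid algebra of `ℕ^n × ℤ^m` over `ℂ`. -/
abbrev LaurentR (n m : ℕ) := AddMonoidAlgebra ℂ ((Fin n → ℕ) × (Fin m → ℤ))

/-- The monomial `x_j · t_1^{c_1}⋯t_m^{c_m}` in `R`. -/
noncomputable def xtMonomial {n m : ℕ} (j : Fin n) (c : Fin m → ℤ) : LaurentR n m :=
  AddMonoidAlgebra.single (Pi.single j 1, c) (1 : ℂ)

/-- The monomial `t_1^{c_1}⋯t_m^{c_m}` in `R`. -/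
noncomputable def tMonomial {n m : ℕ} (c : Fin m → ℤ) : LaurentR n m :=
  AddMonoidAlgebra.single ((0 : Fin n → ℕ), c) (1 : ℂ)

lemma prod_single' {n m : ℕ} {ι : Type*} (s : Finset ι)
    (g : ι → ((Fin n → ℕ) × (Fin m → ℤ))) :
    (∏ k ∈ s, (AddMonoidAlgebra.single (g k) (1:ℂ) : LaurentR n m)) =
      AddMonoidAlgebra.single (∑ k ∈ s, g k) 1 := by
  classical
  induction s using Finset.induction_on with
  | empty => simp [AddMonoidAlgebra.one_def]
  | insert _ _ h ih =>
      rw [Finset.prod_insert h, Finset.sum_insert h, ih,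
        AddMonoidAlgebra.single_mul_single, one_mul]

/-- Given gnat-family coefficients `b`, each quiver coordinate is sent by `φ_𝓕`
to an element of the Cox ring: the exponents `c_k = r_k (b(ρχ_j,k) − b(ρ,k))` are
integers with `c_k ≤ a_{j,k}` and `c_k ≡ a_{j,k} (mod r_k)`, and the monomial
`x_j t^c` lies in the subalgebra generated by the `x_{j'} t^{a_{j'}}` and the
`t_k^{−r_k}`. -/
theorem stmt15 {G : Type*} [CommGroup G] [Fintype G] {n : ℕ} (hn : 1 ≤ n)
    (χ : Fin n → (G →* ℂˣ))
    (m : ℕ) (hm : 1 ≤ m) (r : Fin m → ℕ) (hr : ∀ k, 0 < r k)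
    (a : Fin n → Fin m → ℕ)
    (b : (G →* ℂˣ) → Fin m → ℚ)
    (hb : ∀ (ρ : G →* ℂˣ) (j : Fin n) (k : Fin m), ∃ z : ℕ,
      b ρ k + (a j k : ℚ) / (r k : ℚ) - b (ρ * χ j) k = (z : ℚ)) :
    ∀ (ρ : G →* ℂˣ) (j : Fin n), ∃ c : Fin m → ℤ,
      (∀ k, (c k : ℚ) = (r k : ℚ) * (b (ρ * χ j) k - b ρ k)) ∧
      (∀ k, c k ≤ (a j k : ℤ)) ∧
      (∀ k, (r k : ℤ) ∣ ((a j k : ℤ) - c k)) ∧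
      xtMonomial j c ∈ Algebra.adjoin ℂ
        ((Set.range fun j' : Fin n =>
            xtMonomial j' (fun k => (a j' k : ℤ))) ∪
         (Set.range fun k : Fin m =>
            tMonomial (Pi.single k (-(r k : ℤ))))) := by
  intro ρ j
  choose z hz using hb ρ j
  refine ⟨fun k => (a j k : ℤ) - (r k : ℤ) * (z k : ℤ), ?_, ?_, ?_, ?_⟩
  · intro k
    have h := hz k
    have hrk : (r k : ℚ) ≠ 0 := by exact_mod_cast (hr k).ne'
    have hd : b (ρ * χ j) k - b ρ k = (a j k : ℚ) / (r k : ℚ) - (z k : ℚ) := by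
      linarith
    rw [hd]
    push_cast
    field_simp
  · intro k
    have h0 : (0:ℤ) ≤ (r k : ℤ) * (z k : ℤ) := by positivity
    simp only []
    linarith
  · intro k
    exact ⟨(z k : ℤ), by ring⟩
  · set S := Algebra.adjoin ℂ
        ((Set.range fun j' : Fin n =>
            xtMonomial j' (fun k => (a j' k : ℤ))) ∪
         (Set.range fun k : Fin m =>
            tMonomial (Pi.single k (-(r k : ℤ))))) with hS
    have h1 : xtMonomial j (fun k => (a j k : ℤ)) ∈ S :=
      Algebra.subset_adjoin (Or.inl ⟨j, rfl⟩)
    have h2 : ∀ k : Fin m, tMonomial (Pi.single k (-(r k : ℤ))) ∈ S := fun k =>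
      Algebra.subset_adjoin (Or.inr ⟨k, rfl⟩)
    have key : xtMonomial j (fun k => (a j k : ℤ) - (r k : ℤ) * (z k : ℤ))
        = xtMonomial j (fun k => (a j k : ℤ)) *
          ∏ k : Fin m, tMonomial (Pi.single k (-(r k : ℤ))) ^ z k := by
      show (AddMonoidAlgebra.single (Pi.single j 1,
              fun k => (a j k : ℤ) - (r k : ℤ) * (z k : ℤ)) (1:ℂ) : LaurentR n m)
          = AddMonoidAlgebra.single (Pi.single j 1, fun k => (a j k : ℤ)) 1 *
            ∏ k : Fin m,
              (AddMonoidAlgebra.single ((0 : Fin n → ℕ), Pi.single k (-(r k : ℤ))) (1:ℂ)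
                : LaurentR n m) ^ z k
      have hpow : ∀ k : Fin m,
          (AddMonoidAlgebra.single ((0 : Fin n → ℕ), Pi.single k (-(r k : ℤ))) (1:ℂ)
            : LaurentR n m) ^ z k
          = AddMonoidAlgebra.single (z k • ((0 : Fin n → ℕ), Pi.single k (-(r k : ℤ)))) 1 := by
        intro k
        rw [AddMonoidAlgebra.single_pow, one_pow]
      simp only [hpow]
      rw [prod_single', AddMonoidAlgebra.single_mul_single, one_mul]
      congr 1
      refine Prod.ext ?_ ?_
      · simp [Prod.fst_sum]
      · funext k'
        simp only [Prod.snd_add, Prod.snd_sum, Prod.smul_mk, Pi.add_apply,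
          Finset.sum_apply, Pi.smul_apply, Pi.single_apply, smul_ite, smul_zero,
          smul_neg, Pi.mul_apply, Pi.natCast_apply, mul_ite, mul_zero, Finset.sum_ite_eq', Finset.sum_ite_eq, Finset.mem_univ, if_true, nsmul_eq_mul]
        push_cast
        ring
    rw [key]
    exact S.mul_mem h1 (prod_mem fun k _ => pow_mem (h2 k) _)
end
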